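/- For c ∈ [1/2, 1) and P ∈ 𝒫₆, the attractor A(c,P) is connected. In particular there exists a sequence {d_i}_{i≥1} with each d_i ∈ {v₁-v₃, v₃-v₁, 0} such that v₁ - v₃ + Σ_{i=1}^∞ c^i d_i = 0, witnessing A₁ ∩ A₃ ≠ ∅. -/

import Mathlib

/- STATEMENT 19: For c ∈ [1/2, 1) and P ∈ 𝒫₆, the attractor A(c,P) is connected; in
particular there exists a sequence d with each term in {v₁-v₃, v₃-v₁, 0} such that
v₁ - v₃ + Σ_{i=1}^∞ cⁱ dᵢ = 0, witnessing A₁ ∩ A₃ ≠ ∅. (0-based: v₁ = vtx 0, v₃ = vtx 2;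
the sum is written with d indexed from 0 and weight c^(i+1).) -/
noncomputable section
open Matrix

abbrev E3 := EuclideanSpace ℝ (Fin 3)

def vtx : Fin 4 → E3 :=
  ![!₂[1, -1, 1], !₂[-1, 1, 1], !₂[-1, -1, -1], !₂[1, 1, -1]]

/-- The other four vertices of the cube `[-1,1]³`. -/
def vtx' : Fin 4 → E3 :=
  ![!₂[1, 1, 1], !₂[-1, -1, 1], !₂[1, -1, -1], !₂[-1, 1, -1]]

/-- The cube `C₀ = [-1,1]³`. -/
def C0 : Set E3 := {x | ∀ i, x i ∈ Set.Icc (-1 : ℝ) 1}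

/-- The regular tetrahedron `T₀` with vertices `v₁, v₂, v₃, v₄`. -/
def T0 : Set E3 := convexHull ℝ (Set.range vtx)

/-- Membership in the hexahedral group `𝒫₆`: rotations preserving the cube `C₀`. -/
def memP6 (Q : Matrix (Fin 3) (Fin 3) ℝ) : Prop :=
  Q ∈ Matrix.specialOrthogonalGroup (Fin 3) ℝ ∧ Matrix.toEuclideanLin Q '' C0 = C0

/-- Membership in the tetrahedral group `𝒫₄`: rotations preserving the tetrahedron `T₀`. -/
def memP4 (Q : Matrix (Fin 3) (Fin 3) ℝ) : Prop :=
  Q ∈ Matrix.specialOrthogonalGroup (Fin 3) ℝ ∧ Matrix.toEuclideanLin Q '' T0 = T0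

def fmap (c : ℝ) (P : Matrix (Fin 3) (Fin 3) ℝ) (i : Fin 4) (x : E3) : E3 :=
  c • Matrix.toEuclideanLin P x + vtx i

def IsAttractor (c : ℝ) (P : Matrix (Fin 3) (Fin 3) ℝ) (A : Set E3) : Prop :=
  A.Nonempty ∧ IsCompact A ∧ A = ⋃ i : Fin 4, fmap c P i '' A

open Filter

def Dset : Set E3 := {u | ∃ a b : Fin 4, u = vtx a - vtx b}

lemma vtx_coord (a : Fin 4) (i : Fin 3) : vtx a i = 1 ∨ vtx a i = -1 := by
  fin_cases a <;> fin_cases i <;> simp [vtx]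

lemma normsq (x : E3) : ‖x‖^2 = ∑ i, (x i)^2 := by
  rw [EuclideanSpace.norm_eq, Real.sq_sqrt (by positivity)]
  simp [Real.norm_eq_abs, sq_abs]

lemma norm_map_E3 {Q : Matrix (Fin 3) (Fin 3) ℝ} (hQ : Qᵀ * Q = 1) (x : E3) :
    ‖Matrix.toEuclideanLin Q x‖ = ‖x‖ := by
  have h2 : ‖Matrix.toEuclideanLin Q x‖^2 = ‖x‖^2 := by
    rw [← real_inner_self_eq_norm_sq, ← real_inner_self_eq_norm_sq]
    show ((Q *ᵥ ⇑x) ⬝ᵥ (Q *ᵥ ⇑x) : ℝ) = (⇑x ⬝ᵥ ⇑x : ℝ)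
    rw [Matrix.dotProduct_mulVec, ← Matrix.mulVec_transpose, Matrix.mulVec_mulVec, hQ,
      Matrix.one_mulVec]
  nlinarith [norm_nonneg (Matrix.toEuclideanLin Q x), norm_nonneg x]

lemma e3_ext {y z : E3} (e0 : y 0 = z 0) (e1 : y 1 = z 1) (e2 : y 2 = z 2) : y = z := by
  ext i
  fin_cases i
  · exact e0
  · exact e1
  · exact e2

lemma sq_one {t : ℝ} (h : t^2 = 1) : t = 1 ∨ t = -1 := by
  rcases mul_eq_zero.1 (show (t - 1) * (t + 1) = 0 by nlinarith) with h'|h'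
  · left; linarith
  · right; linarith

lemma vertex_map {L : E3 →ₗ[ℝ] E3} (hn : ∀ x, ‖L x‖ = ‖x‖) (hC : ∀ x ∈ C0, L x ∈ C0)
    {x : E3} (hx : ∀ i, x i = 1 ∨ x i = -1) : ∀ i, L x i = 1 ∨ L x i = -1 := by
  have hxC : x ∈ C0 := fun i => by rcases hx i with h|h <;> rw [h] <;> constructor <;> norm_num
  have hLC := hC x hxC
  have h3 : ∑ i, (L x i)^2 = 3 := by
    have he : ‖L x‖^2 = ‖x‖^2 := by rw [hn]
    rw [normsq, normsq] at he
    rw [he, Fin.sum_univ_three]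
    rcases hx 0 with h|h <;> rcases hx 1 with h1|h1 <;> rcases hx 2 with h2|h2 <;>
      rw [h, h1, h2] <;> norm_num
  have hb : ∀ i, (L x i)^2 ≤ 1 := fun i => by
    obtain ⟨hl, hr⟩ := hLC i; nlinarith
  intro i
  rw [Fin.sum_univ_three] at h3
  apply sq_one
  have := hb 0; have := hb 1; have := hb 2
  fin_cases i
  · show L x 0 ^ 2 = 1; nlinarith
  · show L x 1 ^ 2 = 1; nlinarith
  · show L x 2 ^ 2 = 1; nlinarith

set_option linter.unreachableTactic false in
set_option linter.unnecessarySeqFocus false in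
lemma mem_Dset_of_coords {y : E3} (h0 : y 0 = 0 ∨ y 0 = 2 ∨ y 0 = -2)
    (h1 : y 1 = 0 ∨ y 1 = 2 ∨ y 1 = -2) (h2 : y 2 = 0 ∨ y 2 = 2 ∨ y 2 = -2)
    (hs : (y 0)^2 + (y 1)^2 + (y 2)^2 = 8) : y ∈ Dset := by
  rcases h0 with h0|h0|h0 <;> rcases h1 with h1|h1|h1 <;> rcases h2 with h2|h2|h2 <;>
    [skip; skip; skip; skip;
     exact ⟨1, 2, e3_ext (by simp [vtx, h0] <;> norm_num) (by simp [vtx, h1] <;> norm_num) (by simp [vtx, h2] <;> norm_num)⟩;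
     exact ⟨3, 0, e3_ext (by simp [vtx, h0] <;> norm_num) (by simp [vtx, h1] <;> norm_num) (by simp [vtx, h2] <;> norm_num)⟩;
     skip;
     exact ⟨0, 3, e3_ext (by simp [vtx, h0] <;> norm_num) (by simp [vtx, h1] <;> norm_num) (by simp [vtx, h2] <;> norm_num)⟩;
     exact ⟨2, 1, e3_ext (by simp [vtx, h0] <;> norm_num) (by simp [vtx, h1] <;> norm_num) (by simp [vtx, h2] <;> norm_num)⟩;
     skip;
     exact ⟨0, 2, e3_ext (by simp [vtx, h0] <;> norm_num) (by simp [vtx, h1] <;> norm_num) (by simp [vtx, h2] <;> norm_num)⟩;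
     exact ⟨3, 1, e3_ext (by simp [vtx, h0] <;> norm_num) (by simp [vtx, h1] <;> norm_num) (by simp [vtx, h2] <;> norm_num)⟩;
     exact ⟨3, 2, e3_ext (by simp [vtx, h0] <;> norm_num) (by simp [vtx, h1] <;> norm_num) (by simp [vtx, h2] <;> norm_num)⟩;
     skip; skip;
     exact ⟨0, 1, e3_ext (by simp [vtx, h0] <;> norm_num) (by simp [vtx, h1] <;> norm_num) (by simp [vtx, h2] <;> norm_num)⟩;
     skip; skip; skip;
     exact ⟨1, 3, e3_ext (by simp [vtx, h0] <;> norm_num) (by simp [vtx, h1] <;> norm_num) (by simp [vtx, h2] <;> norm_num)⟩;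
     exact ⟨2, 0, e3_ext (by simp [vtx, h0] <;> norm_num) (by simp [vtx, h1] <;> norm_num) (by simp [vtx, h2] <;> norm_num)⟩;
     exact ⟨1, 0, e3_ext (by simp [vtx, h0] <;> norm_num) (by simp [vtx, h1] <;> norm_num) (by simp [vtx, h2] <;> norm_num)⟩;
     skip; skip;
     exact ⟨2, 3, e3_ext (by simp [vtx, h0] <;> norm_num) (by simp [vtx, h1] <;> norm_num) (by simp [vtx, h2] <;> norm_num)⟩;
     skip; skip]
  all_goals (exfalso; rw [h0, h1, h2] at hs; norm_num at hs)

lemma diag_sumsq (a b : Fin 4) (h : a ≠ b) : ∑ i, ((vtx a - vtx b) i)^2 = 8 := by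
  fin_cases a <;> fin_cases b <;> simp_all [vtx, Fin.sum_univ_three] <;> norm_num

lemma diag_map {L : E3 →ₗ[ℝ] E3} (hn : ∀ x, ‖L x‖ = ‖x‖) (hC : ∀ x ∈ C0, L x ∈ C0)
    {u : E3} (hu : u ∈ Dset) : L u ∈ Dset := by
  obtain ⟨a, b, rfl⟩ := hu
  by_cases hab : a = b
  · subst hab
    exact ⟨0, 0, by simp⟩
  · have hy := vertex_map hn hC (vtx_coord a)
    have hz := vertex_map hn hC (vtx_coord b)
    have happ : ∀ i, L (vtx a - vtx b) i = L (vtx a) i - L (vtx b) i := by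
      intro i; rw [map_sub]; simp
    have hcoord : ∀ i : Fin 3,
        L (vtx a - vtx b) i = 0 ∨ L (vtx a - vtx b) i = 2 ∨ L (vtx a - vtx b) i = -2 := by
      intro i
      rcases hy i with h|h <;> rcases hz i with h'|h' <;> rw [happ i, h, h'] <;> norm_num
    have hsq : (L (vtx a - vtx b) 0)^2 + (L (vtx a - vtx b) 1)^2 + (L (vtx a - vtx b) 2)^2 = 8 := by
      have h1 : ‖L (vtx a - vtx b)‖^2 = ‖vtx a - vtx b‖^2 := by rw [hn]
      rw [normsq, normsq, diag_sumsq a b hab, Fin.sum_univ_three] at h1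
      exact h1
    exact mem_Dset_of_coords (hcoord 0) (hcoord 1) (hcoord 2) hsq

lemma vtx_norm_le (i : Fin 4) : ‖vtx i‖ ≤ 2 := by
  have h := normsq (vtx i)
  have h3 : ∑ j, (vtx i j)^2 = 3 := by
    fin_cases i <;> simp [vtx, Fin.sum_univ_three] <;> norm_num
  nlinarith [norm_nonneg (vtx i)]

structure P6Facts (P : Matrix (Fin 3) (Fin 3) ℝ) where
  M : E3 →ₗ[ℝ] E3
  N : E3 →ₗ[ℝ] E3
  hM : M = Matrix.toEuclideanLin P
  hnM : ∀ x, ‖M x‖ = ‖x‖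
  hMN : ∀ x, M (N x) = x
  hDM : ∀ u ∈ Dset, M u ∈ Dset
  hDN : ∀ u ∈ Dset, N u ∈ Dset

def p6facts {P : Matrix (Fin 3) (Fin 3) ℝ} (hP : memP6 P) : P6Facts P := by
  have horth := (Matrix.mem_specialOrthogonalGroup_iff.1 hP.1).1
  have hPPt : P * Pᵀ = 1 := by
    have := Matrix.mem_orthogonalGroup_iff _ _ |>.1 horth
    simpa using this
  have hPtP : Pᵀ * P = 1 := mul_eq_one_comm.1 hPPt
  set M : E3 →ₗ[ℝ] E3 := Matrix.toEuclideanLin P with hMdef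
  set N : E3 →ₗ[ℝ] E3 := Matrix.toEuclideanLin Pᵀ with hNdef
  have hnM : ∀ x, ‖M x‖ = ‖x‖ := norm_map_E3 hPtP
  have hnN : ∀ x, ‖N x‖ = ‖x‖ := by
    apply norm_map_E3; rwa [Matrix.transpose_transpose]
  have hMN : ∀ x, M (N x) = x := by
    intro x
    show Matrix.toEuclideanLin P (Matrix.toEuclideanLin Pᵀ x) = x
    apply (WithLp.equiv 2 (Fin 3 → ℝ)).injective
    simp [Matrix.mulVec_mulVec, hPPt]
  have hNM : ∀ x, N (M x) = x := by
    intro x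
    show Matrix.toEuclideanLin Pᵀ (Matrix.toEuclideanLin P x) = x
    apply (WithLp.equiv 2 (Fin 3 → ℝ)).injective
    simp [Matrix.mulVec_mulVec, hPtP]
  have hCM : ∀ x ∈ C0, M x ∈ C0 := by
    intro x hx
    have : M x ∈ Matrix.toEuclideanLin P '' C0 := ⟨x, hx, rfl⟩
    rwa [hP.2] at this
  have hCN : ∀ x ∈ C0, N x ∈ C0 := by
    intro x hx
    rw [← hP.2] at hx
    obtain ⟨y, hy, rfl⟩ := hx
    have : N (M y) = y := hNM y
    rw [this]
    exact hy
  exact ⟨M, N, rfl, hnM, hMN, fun u hu => diag_map hnM hCM hu, fun u hu => diag_map hnN hCN hu⟩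

lemma greedy {c : ℝ} (hc : c ∈ Set.Ico (1 / 2 : ℝ) 1) :
    ∃ ε : ℕ → ℝ, (∀ n, ε n = 0 ∨ ε n = 1) ∧ HasSum (fun n => ε n * c ^ (n + 1)) 1 := by
  obtain ⟨hc2, hc1⟩ := hc
  have hc0 : 0 < c := by linarith
  set r : ℕ → ℝ :=
    fun n => Nat.rec 1 (fun m rm => if c ^ (m + 1) ≤ rm then rm - c ^ (m + 1) else rm) n with hr
  have hr0 : r 0 = 1 := rfl
  have hrs : ∀ m, r (m + 1) = if c ^ (m + 1) ≤ r m then r m - c ^ (m + 1) else r m := fun m => rfl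
  set ε : ℕ → ℝ := fun n => if c ^ (n + 1) ≤ r n then 1 else 0 with hεdef
  have hεs : ∀ n, ε n = if c ^ (n + 1) ≤ r n then 1 else 0 := fun n => rfl
  have hinv : ∀ n, 0 ≤ r n ∧ r n * (1 - c) ≤ c ^ (n + 1) := by
    intro n
    induction n with
    | zero => constructor <;> simp [hr0] <;> nlinarith
    | succ m ih =>
      obtain ⟨ih0, ih1⟩ := ih
      rw [hrs m]
      by_cases h : c ^ (m + 1) ≤ r m
      · rw [if_pos h]
        constructor
        · linarith
        · have hp : 0 < c ^ (m + 1) := pow_pos hc0 _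
          have : c ^ (m + 2) = c ^ (m + 1) * c := by ring
          nlinarith
      · rw [if_neg h]
        push_neg at h
        have hp : 0 < c ^ (m + 1) := pow_pos hc0 _
        have : c ^ (m + 2) = c ^ (m + 1) * c := by ring
        constructor
        · exact ih0
        · nlinarith
  have hps : ∀ n, ∑ k ∈ Finset.range n, ε k * c ^ (k + 1) = 1 - r n := by
    intro n
    induction n with
    | zero => simp [hr0]
    | succ m ih =>
      rw [Finset.sum_range_succ, ih, hrs m, hεs m]
      by_cases h : c ^ (m + 1) ≤ r m
      · rw [if_pos h, if_pos h]; ring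
      · rw [if_neg h, if_neg h]; ring
  refine ⟨ε, fun n => by by_cases h : c ^ (n + 1) ≤ r n <;> simp [hεs n, h], ?_⟩
  have hnonneg : ∀ n, 0 ≤ ε n * c ^ (n + 1) := by
    intro n
    have := pow_pos hc0 (n + 1)
    by_cases h : c ^ (n + 1) ≤ r n <;> simp [hεs n, h] <;> positivity
  rw [hasSum_iff_tendsto_nat_of_nonneg hnonneg]
  have hrlim : Filter.Tendsto r Filter.atTop (nhds 0) := by
    apply squeeze_zero (fun n => (hinv n).1) (fun n => ?_)
      (g := fun n => (c / (1 - c)) * c ^ n)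
    · have h2 : Filter.Tendsto (fun n : ℕ => c ^ n) Filter.atTop (nhds 0) :=
        tendsto_pow_atTop_nhds_zero_of_lt_one (le_of_lt hc0) hc1
      have := h2.const_mul (c / (1 - c))
      simpa using this
    · have h1c : 0 < 1 - c := by linarith
      have := (hinv n).2
      show r n ≤ c / (1 - c) * c ^ n
      rw [div_mul_eq_mul_div, le_div_iff₀ h1c]
      calc r n * (1 - c) ≤ c ^ (n + 1) := this
        _ = c * c ^ n := by ring
  have : Filter.Tendsto (fun n => 1 - r n) Filter.atTop (nhds (1 - 0)) :=
    Filter.Tendsto.sub tendsto_const_nhds hrlim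
  simp only [sub_zero] at this
  convert this using 2 with n
  · exact hps n

section Addr
variable {c : ℝ} {P : Matrix (Fin 3) (Fin 3) ℝ} {A : Set E3}

lemma pow_norm {M : E3 →ₗ[ℝ] E3} (hnM : ∀ x, ‖M x‖ = ‖x‖) (k : ℕ) (x : E3) :
    ‖(M ^ k) x‖ = ‖x‖ := by
  induction k generalizing x with
  | zero => rw [pow_zero]; rfl
  | succ m ih => rw [pow_succ, Module.End.mul_apply, ih, hnM]

lemma addr_summable (hc0 : 0 ≤ c) (hc1 : c < 1) {M : E3 →ₗ[ℝ] E3}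
    (hnM : ∀ x, ‖M x‖ = ‖x‖) (v : ℕ → E3) (hv : ∀ k, ‖v k‖ ≤ 2) :
    Summable (fun k => c ^ k • ((M ^ k) (v k))) := by
  apply Summable.of_norm_bounded
    ((summable_geometric_of_lt_one hc0 hc1).mul_left 2)
  intro k
  rw [norm_smul, pow_norm hnM]
  have h1 : ‖c ^ k‖ = c ^ k := by
    rw [Real.norm_eq_abs, abs_of_nonneg (pow_nonneg hc0 k)]
  rw [h1]
  have := hv k
  have := pow_nonneg hc0 k
  nlinarith

lemma partial_mem (hA : IsAttractor c P A) :
    ∀ (n : ℕ) (s : ℕ → Fin 4) (x : E3), x ∈ A →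
      (∑ k ∈ Finset.range n, c ^ k • ((Matrix.toEuclideanLin P ^ k) (vtx (s k)))) +
        c ^ n • ((Matrix.toEuclideanLin P ^ n) x) ∈ A := by
  intro n
  induction n with
  | zero =>
    intro s x hx
    simpa [Module.End.one_apply] using hx
  | succ n ih =>
    intro s x hx
    set M := Matrix.toEuclideanLin P with hM
    have hz := ih (fun k => s (k + 1)) x hx
    set z := (∑ k ∈ Finset.range n, c ^ k • ((M ^ k) (vtx (s (k + 1))))) +
        c ^ n • ((M ^ n) x) with hzdef
    have hmem : fmap c P (s 0) z ∈ A := by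
      rw [hA.2.2]
      exact Set.mem_iUnion.2 ⟨s 0, Set.mem_image_of_mem _ hz⟩
    have key : fmap c P (s 0) z =
        (∑ k ∈ Finset.range (n + 1), c ^ k • ((M ^ k) (vtx (s k)))) +
          c ^ (n + 1) • ((M ^ (n + 1)) x) := by
      show c • M z + vtx (s 0) = _
      have hMz : M z = (∑ k ∈ Finset.range n, c ^ k • ((M ^ (k + 1)) (vtx (s (k + 1))))) +
          c ^ n • ((M ^ (n + 1)) x) := by
        rw [hzdef, map_add, _root_.map_smul, map_sum]
        congr 1
        · apply Finset.sum_congr rfl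
          intro k _
          rw [_root_.map_smul, pow_succ', Module.End.mul_apply]
        · rw [pow_succ', Module.End.mul_apply]
      rw [hMz, smul_add, Finset.smul_sum, Finset.sum_range_succ']
      simp only [smul_smul, ← pow_succ']
      rw [pow_zero M, Module.End.one_apply, pow_zero c, one_smul, add_right_comm]
    rw [key] at hmem
    exact hmem


lemma vtx_norm_le' (s : ℕ → Fin 4) : ∀ k, ‖vtx (s k)‖ ≤ 2 := fun k => vtx_norm_le (s k)

lemma addr_mem (hc0 : 0 ≤ c) (hc1 : c < 1) (hA : IsAttractor c P A)
    (hnM : ∀ x, ‖Matrix.toEuclideanLin P x‖ = ‖x‖) (s : ℕ → Fin 4) :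
    (∑' k, c ^ k • ((Matrix.toEuclideanLin P ^ k) (vtx (s k)))) ∈ A := by
  obtain ⟨x0, hx0⟩ := hA.1
  have hsum := addr_summable hc0 hc1 hnM (fun k => vtx (s k)) (vtx_norm_le' s)
  have htend := hsum.hasSum.tendsto_sum_nat
  have htail : Tendsto (fun n => c ^ n • ((Matrix.toEuclideanLin P ^ n) x0)) atTop (nhds 0) := by
    rw [tendsto_zero_iff_norm_tendsto_zero]
    have heq : ∀ n : ℕ, ‖c ^ n • ((Matrix.toEuclideanLin P ^ n) x0)‖ = c ^ n * ‖x0‖ := by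
      intro n
      rw [norm_smul, pow_norm hnM, Real.norm_eq_abs, abs_of_nonneg (pow_nonneg hc0 n)]
    simp only [heq]
    simpa using (tendsto_pow_atTop_nhds_zero_of_lt_one hc0 hc1).mul_const ‖x0‖
  have hlim := htend.add htail
  rw [add_zero] at hlim
  exact hA.2.1.isClosed.mem_of_tendsto hlim
    (Filter.Eventually.of_forall fun n => partial_mem hA n s x0 hx0)

lemma fmap_tsum (hc0 : 0 ≤ c) (hc1 : c < 1)
    (hnM : ∀ x, ‖Matrix.toEuclideanLin P x‖ = ‖x‖) (s : ℕ → Fin 4) :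
    fmap c P (s 0) (∑' k, c ^ k • ((Matrix.toEuclideanLin P ^ k) (vtx (s (k + 1))))) =
      ∑' k, c ^ k • ((Matrix.toEuclideanLin P ^ k) (vtx (s k))) := by
  set M := Matrix.toEuclideanLin P with hM
  have hs1 := addr_summable hc0 hc1 hnM (fun k => vtx (s (k + 1)))
    (fun k => vtx_norm_le (s (k + 1)))
  have hs0 := addr_summable hc0 hc1 hnM (fun k => vtx (s k)) (vtx_norm_le' s)
  set Mc : E3 →L[ℝ] E3 := LinearMap.toContinuousLinearMap M with hMc
  have hMcapp : ∀ y, Mc y = M y := fun y => rfl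
  have hmap := (hs1.hasSum.mapL Mc).tsum_eq
  have hterm : ∀ k, Mc (c ^ k • ((M ^ k) (vtx (s (k + 1))))) =
      c ^ k • ((M ^ (k + 1)) (vtx (s (k + 1)))) := by
    intro k
    rw [hMcapp, _root_.map_smul, pow_succ', Module.End.mul_apply]
  show c • M (∑' k, c ^ k • ((M ^ k) (vtx (s (k + 1))))) + vtx (s 0) = _
  have h1 : M (∑' k, c ^ k • ((M ^ k) (vtx (s (k + 1))))) =
      ∑' k, c ^ k • ((M ^ (k + 1)) (vtx (s (k + 1)))) := by
    calc M (∑' k, c ^ k • ((M ^ k) (vtx (s (k + 1)))))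
        = Mc (∑' k, c ^ k • ((M ^ k) (vtx (s (k + 1))))) := rfl
      _ = ∑' k, Mc (c ^ k • ((M ^ k) (vtx (s (k + 1))))) := hmap.symm
      _ = ∑' k, c ^ k • ((M ^ (k + 1)) (vtx (s (k + 1)))) := tsum_congr hterm
  have hs2 : Summable (fun k => c ^ k • ((M ^ (k + 1)) (vtx (s (k + 1))))) :=
    ((hs1.hasSum.mapL Mc).summable).congr hterm
  have h2 : c • (∑' k, c ^ k • ((M ^ (k + 1)) (vtx (s (k + 1))))) =
      ∑' k, c ^ (k + 1) • ((M ^ (k + 1)) (vtx (s (k + 1)))) := by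
    rw [← hs2.tsum_const_smul c]
    exact tsum_congr fun k => by rw [smul_smul, ← pow_succ']
  rw [h1, h2, hs0.tsum_eq_zero_add]
  simp only [pow_zero, one_smul, Module.End.one_apply]
  exact add_comm _ _

end Addr

section PI
variable {c : ℝ} {P : Matrix (Fin 3) (Fin 3) ℝ} {A : Set E3}

lemma pieces_intersect (hc : c ∈ Set.Ico (1 / 2 : ℝ) 1) (hP : memP6 P)
    (hA : IsAttractor c P A) (i j : Fin 4) :
    (fmap c P i '' A ∩ fmap c P j '' A).Nonempty := by
  have hc0 : (0 : ℝ) ≤ c := le_trans (by norm_num) hc.1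
  have hc1 : c < 1 := hc.2
  obtain ⟨M, N, hM, hnM, hMN, hDM, hDN⟩ := p6facts hP
  subst hM
  obtain ⟨ε, hε01, hεsum⟩ := greedy hc
  set u : ℕ → E3 := fun k => Nat.rec (vtx i - vtx j) (fun _ uk => N uk) k with hu
  have hu0 : u 0 = vtx i - vtx j := rfl
  have hus : ∀ k, u (k + 1) = N (u k) := fun k => rfl
  have huD : ∀ k, u k ∈ Dset := by
    intro k
    induction k with
    | zero => exact ⟨i, j, rfl⟩
    | succ m ih => rw [hus]; exact hDN _ ih
  have hMu : ∀ k, (Matrix.toEuclideanLin P ^ k) (u k) = vtx i - vtx j := by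
    intro k
    induction k with
    | zero => rw [pow_zero, Module.End.one_apply, hu0]
    | succ m ih => rw [hus, pow_succ, Module.End.mul_apply, hMN, ih]
  have hneg : ∀ k, ∃ p q : Fin 4, vtx p - vtx q = -(u (k + 1)) := by
    intro k
    obtain ⟨p, q, h⟩ := huD (k + 1)
    exact ⟨q, p, by rw [h, neg_sub]⟩
  choose pa pb hpq using hneg
  set a : ℕ → Fin 4 := fun k => Nat.casesOn k i fun m => if ε m = 1 then pa m else 0 with hadef
  set b : ℕ → Fin 4 := fun k => Nat.casesOn k j fun m => if ε m = 1 then pb m else 0 with hbdef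
  have ha0 : a 0 = i := rfl
  have hb0 : b 0 = j := rfl
  have hterm : ∀ m, vtx (a (m + 1)) - vtx (b (m + 1)) = (-(ε m)) • u (m + 1) := by
    intro m
    show vtx (if ε m = 1 then pa m else 0) - vtx (if ε m = 1 then pb m else 0) = _
    rcases hε01 m with h|h
    · rw [h, if_neg (by norm_num), if_neg (by norm_num), sub_self, neg_zero, zero_smul]
    · rw [h, if_pos rfl, if_pos rfl, hpq m, neg_smul, one_smul]
  have hsa := addr_summable hc0 hc1 hnM (fun k => vtx (a k)) (vtx_norm_le' a)
  have hsb := addr_summable hc0 hc1 hnM (fun k => vtx (b k)) (vtx_norm_le' b)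
  set g : ℕ → E3 :=
    fun k => c ^ k • ((Matrix.toEuclideanLin P ^ k) (vtx (a k) - vtx (b k))) with hgdef
  have hgeq : ∀ k, g k = c ^ k • ((Matrix.toEuclideanLin P ^ k) (vtx (a k))) -
      c ^ k • ((Matrix.toEuclideanLin P ^ k) (vtx (b k))) := by
    intro k
    show c ^ k • ((Matrix.toEuclideanLin P ^ k) (vtx (a k) - vtx (b k))) = _
    rw [map_sub, smul_sub]
  have hsg : Summable g := (hsa.sub hsb).congr (fun k => (hgeq k).symm)
  have hg0 : g 0 = vtx i - vtx j := by
    show c ^ 0 • ((Matrix.toEuclideanLin P ^ 0) (vtx (a 0) - vtx (b 0))) = _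
    simp only [pow_zero, one_smul, Module.End.one_apply, ha0, hb0]
  have hg1 : ∀ k, g (k + 1) = (-(ε k * c ^ (k + 1))) • (vtx i - vtx j) := by
    intro k
    show c ^ (k + 1) • ((Matrix.toEuclideanLin P ^ (k + 1)) (vtx (a (k + 1)) - vtx (b (k + 1)))) = _
    rw [hterm k, _root_.map_smul, hMu (k + 1), smul_smul]
    congr 1
    ring
  have htsum0 : (∑' k, g k) = 0 := by
    rw [hsg.tsum_eq_zero_add, hg0, tsum_congr hg1,
      (hεsum.summable.neg).tsum_smul_const _, tsum_neg, hεsum.tsum_eq]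
    simp
  have hπeq : (∑' k, c ^ k • ((Matrix.toEuclideanLin P ^ k) (vtx (a k)))) =
      ∑' k, c ^ k • ((Matrix.toEuclideanLin P ^ k) (vtx (b k))) := by
    have hd := hsa.tsum_sub hsb
    have : (∑' k, (c ^ k • ((Matrix.toEuclideanLin P ^ k) (vtx (a k))) -
        c ^ k • ((Matrix.toEuclideanLin P ^ k) (vtx (b k))))) = 0 := by
      rw [← tsum_congr hgeq]; exact htsum0
    rw [this] at hd
    exact sub_eq_zero.1 hd.symm
  have hma : (∑' k, c ^ k • ((Matrix.toEuclideanLin P ^ k) (vtx (a k)))) ∈ fmap c P i '' A := by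
    have h1 := fmap_tsum hc0 hc1 hnM a
    rw [ha0] at h1
    exact ⟨_, addr_mem hc0 hc1 hA hnM (fun k => a (k + 1)), h1⟩
  have hmb : (∑' k, c ^ k • ((Matrix.toEuclideanLin P ^ k) (vtx (b k)))) ∈ fmap c P j '' A := by
    have h1 := fmap_tsum hc0 hc1 hnM b
    rw [hb0] at h1
    exact ⟨_, addr_mem hc0 hc1 hA hnM (fun k => b (k + 1)), h1⟩
  exact ⟨_, hma, hπeq ▸ hmb⟩
end PI

section Conn
variable {c : ℝ} {P : Matrix (Fin 3) (Fin 3) ℝ} {A : Set E3}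

lemma conn_iInter {S : ℕ → Set E3} (hcomp : ∀ n, IsCompact (S n))
    (hconn : ∀ n, IsPreconnected (S n)) (hanti : ∀ n, S (n + 1) ⊆ S n) :
    IsPreconnected (⋂ n, S n) := by
  have hmono : Antitone S := antitone_nat_of_succ_le hanti
  intro U V hU hV hcover hUne hVne
  by_contra hempty
  rw [Set.not_nonempty_iff_eq_empty] at hempty
  set K := ⋂ n, S n with hK
  have hKclosed : IsClosed K := isClosed_iInter fun n => (hcomp n).isClosed
  have hKcomp : IsCompact K := (hcomp 0).of_isClosed_subset hKclosed (Set.iInter_subset _ 0)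
  set F := K ∩ U with hF
  set G := K ∩ V with hG
  have hFG : K = F ∪ G := by
    rw [hF, hG, ← Set.inter_union_distrib_left]
    exact (Set.inter_eq_left.2 hcover).symm
  have hFKV : F = K \ V := by
    apply Set.Subset.antisymm
    · rintro x ⟨hxK, hxU⟩
      exact ⟨hxK, fun hxV => Set.eq_empty_iff_forall_notMem.1 hempty x ⟨hxK, hxU, hxV⟩⟩
    · rintro x ⟨hxK, hxV⟩
      refine ⟨hxK, ?_⟩
      rcases hcover hxK with h|h
      · exact h
      · exact absurd h hxV
  have hGKU : G = K \ U := by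
    apply Set.Subset.antisymm
    · rintro x ⟨hxK, hxV⟩
      exact ⟨hxK, fun hxU => Set.eq_empty_iff_forall_notMem.1 hempty x ⟨hxK, hxU, hxV⟩⟩
    · rintro x ⟨hxK, hxU⟩
      refine ⟨hxK, ?_⟩
      rcases hcover hxK with h|h
      · exact absurd h hxU
      · exact h
  have hFclosed : IsClosed F := by rw [hFKV]; exact hKclosed.sdiff hV
  have hGclosed : IsClosed G := by rw [hGKU]; exact hKclosed.sdiff hU
  have hFcomp : IsCompact F := hKcomp.of_isClosed_subset hFclosed Set.inter_subset_left
  have hGcomp : IsCompact G := hKcomp.of_isClosed_subset hGclosed Set.inter_subset_left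
  have hdisjFG : Disjoint F G := by
    rw [Set.disjoint_left]
    rintro x ⟨hxK, hxU⟩ ⟨_, hxV⟩
    exact Set.eq_empty_iff_forall_notMem.1 hempty x ⟨hxK, hxU, hxV⟩
  obtain ⟨U', V', hU', hV', hFU', hGV', hdisj⟩ :=
    SeparatedNhds.of_isCompact_isCompact hFcomp hGcomp hdisjFG
  have hexists : ∃ n, S n ⊆ U' ∪ V' := by
    by_contra hno
    push_neg at hno
    have hTne : ∀ n, (S n \ (U' ∪ V')).Nonempty := fun n => by
      obtain ⟨x, hx1, hx2⟩ := Set.not_subset.1 (hno n)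
      exact ⟨x, hx1, hx2⟩
    have hTdir : Directed (· ⊇ ·) (fun n => S n \ (U' ∪ V')) := by
      intro m n
      refine ⟨max m n, ?_, ?_⟩
      · exact Set.diff_subset_diff_left (hmono (le_max_left m n))
      · exact Set.diff_subset_diff_left (hmono (le_max_right m n))
    obtain ⟨x, hx⟩ := IsCompact.nonempty_iInter_of_directed_nonempty_isCompact_isClosed _
      hTdir hTne (fun n => (hcomp n).diff (hU'.union hV'))
      (fun n => (hcomp n).isClosed.sdiff (hU'.union hV'))
    rw [Set.mem_iInter] at hx
    have hxK : x ∈ K := Set.mem_iInter.2 fun n => (hx n).1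
    have : x ∈ U' ∪ V' := by
      rcases hFG ▸ hxK with h|h
      · exact Or.inl (hFU' h)
      · exact Or.inr (hGV' h)
    exact (hx 0).2 this
  obtain ⟨n, hn⟩ := hexists
  have hFSn : F ⊆ S n ∩ U' := fun x hx => ⟨Set.iInter_subset S n (hx.1), hFU' hx⟩
  have hGSn : G ⊆ S n ∩ V' := fun x hx => ⟨Set.iInter_subset S n (hx.1), hGV' hx⟩
  obtain ⟨x, hx⟩ := hconn n U' V' hU' hV' hn (hUne.mono hFSn) (hVne.mono hGSn)
  exact Set.disjoint_left.1 hdisj hx.2.1 hx.2.2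

lemma attractor_conn (hc : c ∈ Set.Ico (1 / 2 : ℝ) 1) (hP : memP6 P)
    (hA : IsAttractor c P A) : IsConnected A := by
  have hc0 : (0 : ℝ) ≤ c := le_trans (by norm_num) hc.1
  have hc1 : c < 1 := hc.2
  obtain ⟨M, N, hM, hnM, hMN, hDM, hDN⟩ := p6facts hP
  subst hM
  have hcont : ∀ i, Continuous (fmap c P i) := by
    intro i
    have hMc : Continuous (Matrix.toEuclideanLin P (𝕜 := ℝ)) :=
      LinearMap.continuous_of_finiteDimensional _
    exact (hMc.const_smul c).add continuous_const
  have hfA : ∀ i, fmap c P i '' A ⊆ A := by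
    rintro i x ⟨y, hy, rfl⟩
    rw [hA.2.2]
    exact Set.mem_iUnion.2 ⟨i, ⟨y, hy, rfl⟩⟩
  obtain ⟨r0, hr0⟩ := hA.2.1.isBounded.subset_closedBall 0
  set R := max r0 (4 / (1 - c)) with hR
  have h1c : (0 : ℝ) < 1 - c := by linarith
  have hRpos : 0 < R := lt_of_lt_of_le (by positivity) (le_max_right _ _)
  have hAR : A ⊆ Metric.closedBall 0 R :=
    hr0.trans (Metric.closedBall_subset_closedBall (le_max_left _ _))
  have hstep : ∀ (i : Fin 4), ∀ x ∈ Metric.closedBall (0 : E3) R,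
      fmap c P i x ∈ Metric.closedBall (0 : E3) R := by
    intro i x hx
    rw [Metric.mem_closedBall, dist_zero_right] at hx ⊢
    have h4R : 4 ≤ R * (1 - c) := (div_le_iff₀ h1c).1 (le_max_right _ _)
    have hcx : c * ‖x‖ ≤ c * R := mul_le_mul_of_nonneg_left hx hc0
    calc ‖fmap c P i x‖ ≤ ‖c • Matrix.toEuclideanLin P x‖ + ‖vtx i‖ := norm_add_le _ _
      _ = c * ‖x‖ + ‖vtx i‖ := by
          rw [norm_smul, hnM, Real.norm_eq_abs, abs_of_nonneg hc0]
      _ ≤ c * R + 2 := by have := vtx_norm_le i; linarith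
      _ ≤ R := by nlinarith
  set S : ℕ → Set E3 :=
    fun n => Nat.rec (Metric.closedBall 0 R) (fun _ Sn => ⋃ i : Fin 4, fmap c P i '' Sn) n
    with hS
  have hS0 : S 0 = Metric.closedBall 0 R := rfl
  have hSs : ∀ n, S (n + 1) = ⋃ i : Fin 4, fmap c P i '' S n := fun n => rfl
  have hSA : ∀ n, A ⊆ S n := by
    intro n
    induction n with
    | zero => exact hAR
    | succ m ih =>
      rw [hSs]
      intro x hx
      rw [hA.2.2] at hx
      simp only [Set.mem_iUnion] at hx ⊢
      obtain ⟨i, y, hy, rfl⟩ := hx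
      exact ⟨i, y, ih hy, rfl⟩
  have hanti : ∀ n, S (n + 1) ⊆ S n := by
    intro n
    induction n with
    | zero =>
      rw [hSs, hS0]
      refine Set.iUnion_subset fun i => ?_
      rintro x ⟨y, hy, rfl⟩
      exact hstep i y hy
    | succ m ih =>
      rw [hSs (m + 1), hSs m]
      refine Set.iUnion_subset fun i => ?_
      exact Set.subset_iUnion_of_subset i (Set.image_mono ih)
  have hScomp : ∀ n, IsCompact (S n) := by
    intro n
    induction n with
    | zero => exact isCompact_closedBall 0 R
    | succ m ih =>
      rw [hSs]
      exact isCompact_iUnion fun i => ih.image (hcont i)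
  have hSconn : ∀ n, IsConnected (S n) := by
    intro n
    induction n with
    | zero =>
      exact ⟨⟨0, Metric.mem_closedBall_self hRpos.le⟩,
        (convex_closedBall (0 : E3) R).isPreconnected⟩
    | succ m ih =>
      rw [hSs]
      apply IsConnected.iUnion_of_reflTransGen
      · intro i
        exact ih.image _ (hcont i).continuousOn
      · intro i j
        apply Relation.ReflTransGen.single
        obtain ⟨p, hpi, hpj⟩ := pieces_intersect hc hP hA i j
        exact ⟨p, Set.image_mono (hSA m) hpi, Set.image_mono (hSA m) hpj⟩
  have happrox : ∀ n, ∀ x ∈ S n, ∃ a ∈ A, dist x a ≤ c ^ n * (2 * R) := by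
    intro n
    induction n with
    | zero =>
      intro x hx
      obtain ⟨a0, ha0⟩ := hA.1
      refine ⟨a0, ha0, ?_⟩
      rw [hS0] at hx
      rw [Metric.mem_closedBall, dist_zero_right] at hx
      have h2 : ‖a0‖ ≤ R := by
        have := hAR ha0
        rwa [Metric.mem_closedBall, dist_zero_right] at this
      rw [pow_zero, one_mul, dist_eq_norm]
      calc ‖x - a0‖ ≤ ‖x‖ + ‖a0‖ := norm_sub_le _ _
        _ ≤ 2 * R := by linarith
    | succ m ih =>
      intro x hx
      rw [hSs] at hx
      simp only [Set.mem_iUnion] at hx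
      obtain ⟨i, y, hy, rfl⟩ := hx
      obtain ⟨a, haA, hd⟩ := ih y hy
      refine ⟨fmap c P i a, hfA i ⟨a, haA, rfl⟩, ?_⟩
      have hdiff : fmap c P i y - fmap c P i a = c • Matrix.toEuclideanLin P (y - a) := by
        show (c • Matrix.toEuclideanLin P y + vtx i) - (c • Matrix.toEuclideanLin P a + vtx i)
          = c • Matrix.toEuclideanLin P (y - a)
        rw [map_sub, smul_sub]
        abel
      have hdist : dist (fmap c P i y) (fmap c P i a) = c * dist y a := by
        rw [dist_eq_norm, dist_eq_norm, hdiff, norm_smul, hnM, Real.norm_eq_abs,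
          abs_of_nonneg hc0]
      rw [hdist]
      calc c * dist y a ≤ c * (c ^ m * (2 * R)) := mul_le_mul_of_nonneg_left hd hc0
        _ = c ^ (m + 1) * (2 * R) := by ring
  have hKA : (⋂ n, S n) = A := by
    apply Set.Subset.antisymm
    · intro x hx
      rw [Set.mem_iInter] at hx
      rw [← hA.2.1.isClosed.closure_eq, Metric.mem_closure_iff]
      intro δ hδ
      have hlim : Tendsto (fun n : ℕ => c ^ n * (2 * R)) atTop (nhds 0) := by
        simpa using (tendsto_pow_atTop_nhds_zero_of_lt_one hc0 hc1).mul_const (2 * R)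
      obtain ⟨n, hn⟩ := (hlim.eventually_lt_const hδ).exists
      obtain ⟨a, haA, hd⟩ := happrox n x (hx n)
      exact ⟨a, haA, lt_of_le_of_lt hd hn⟩
    · exact Set.subset_iInter hSA
  refine ⟨hA.1, ?_⟩
  rw [← hKA]
  exact conn_iInter hScomp (fun n => (hSconn n).isPreconnected) hanti

end Conn

theorem attractor_connected (c : ℝ) (hc : c ∈ Set.Ico (1 / 2 : ℝ) 1)
    (P : Matrix (Fin 3) (Fin 3) ℝ) (hP : memP6 P)
    (A : Set E3) (hA : IsAttractor c P A) :
    IsConnected A ∧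
    (∃ d : ℕ → E3, (∀ i, d i = vtx 0 - vtx 2 ∨ d i = vtx 2 - vtx 0 ∨ d i = 0) ∧
      (vtx 0 - vtx 2) + ∑' i : ℕ, c ^ (i + 1) • d i = 0) ∧
    (fmap c P 0 '' A ∩ fmap c P 2 '' A).Nonempty := by
  refine ⟨attractor_conn hc hP hA, ?_, ?_⟩
  · obtain ⟨ε, hε01, hεsum⟩ := greedy hc
    refine ⟨fun n => ε n • (vtx 2 - vtx 0), ?_, ?_⟩
    · intro n
      rcases hε01 n with h|h
      · right; right; show ε n • (vtx 2 - vtx 0) = 0; rw [h, zero_smul]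
      · right; left; show ε n • (vtx 2 - vtx 0) = vtx 2 - vtx 0; rw [h, one_smul]
    · have hterm : ∀ n : ℕ, c ^ (n + 1) • (ε n • (vtx 2 - vtx 0)) =
          (ε n * c ^ (n + 1)) • (vtx 2 - vtx 0) := by
        intro n; rw [smul_smul, mul_comm]
      rw [tsum_congr hterm, hεsum.summable.tsum_smul_const _, hεsum.tsum_eq, one_smul]
      abel
  · exact pieces_intersect hc hP hA 0 2
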